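/- arXiv:1706.09236 — 8 statements merged into one kernel-verified Lean document; each statement's English description precedes it below -/
import Mathlib

section
/- Let f be a polynomial over ℝ in d variables with f_p > 0 for some exponent vector p in the frame of f that is a vertex of the Newton polytope of f, and suppose f(1,…,1) < 0. Then f has a zero with all coordinates strictly positive. -/
/-- If f has a positive coefficient f_p > 0 at a vertex p of its Newton
polytope and f(1,…,1) < 0, then f has a zero with all coordinates strictly positive. -/
theorem subtropical_root_finding {d : ℕ} (F : Finset (Fin d → ℕ))
    (coef : (Fin d → ℕ) → ℝ) (hcoef : ∀ q ∈ F, coef q ≠ 0)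
    (p : Fin d → ℕ) (hp : p ∈ F) (hppos : 0 < coef p)
    (hvert : ∃ n : Fin d → ℝ,
      ∀ q ∈ convexHull ℝ ((fun v : Fin d → ℕ => fun i => (v i : ℝ)) '' F),
        q ≠ (fun i => (p i : ℝ)) → ∑ i, n i * (p i : ℝ) > ∑ i, n i * q i)
    (hone : (∑ q ∈ F, coef q * ∏ i, (1 : ℝ) ^ q i) < 0) :
    ∃ x : Fin d → ℝ, (∀ i, 0 < x i) ∧ ∑ q ∈ F, coef q * ∏ i, x i ^ q i = 0 := by
  obtain ⟨n, hn⟩ := hvert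
  set s : (Fin d → ℕ) → ℝ := fun q => ∑ i, n i * q i with hs
  have hlt : ∀ q ∈ F, q ≠ p → s q < s p := by
    intro q hq hqp
    refine hn (fun i => (q i : ℝ)) ?_ ?_
    · exact subset_convexHull ℝ _ ⟨q, hq, rfl⟩
    · intro h
      apply hqp
      funext i
      have := congrFun h i
      exact_mod_cast this
  set g : ℝ → ℝ := fun a => ∑ q ∈ F, coef q * a ^ (s q) with hg
  -- g 1 < 0
  have hg1 : g 1 < 0 := by
    simpa [hg, Real.one_rpow] using hone
  -- for a > 0, g a equals the poly evaluated at x i = a ^ n i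
  have heval : ∀ a : ℝ, 0 < a →
      (∑ q ∈ F, coef q * ∏ i, (a ^ n i) ^ q i) = g a := by
    intro a ha
    refine Finset.sum_congr rfl fun q hq => ?_
    congr 1
    show ∏ i, (a ^ n i) ^ q i = a ^ ∑ i, n i * (q i : ℝ)
    rw [Real.rpow_sum_of_pos ha]
    refine Finset.prod_congr rfl fun i _ => ?_
    rw [← Real.rpow_natCast (a ^ n i) (q i), ← Real.rpow_mul ha.le]
  -- tendsto
  have htend : Filter.Tendsto (fun a : ℝ => ∑ q ∈ F, coef q * a ^ (s q - s p))
      Filter.atTop (nhds (coef p)) := by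
    have : Filter.Tendsto (fun a : ℝ => ∑ q ∈ F, coef q * a ^ (s q - s p))
        Filter.atTop (nhds (∑ q ∈ F, if q = p then coef p else 0)) := by
      refine tendsto_finset_sum _ fun q hq => ?_
      by_cases hqp : q = p
      · subst hqp
        simp only [if_pos rfl, sub_self]
        have : ∀ᶠ a : ℝ in Filter.atTop, coef q * a ^ (0:ℝ) = coef q := by
          filter_upwards [Filter.eventually_gt_atTop 0] with a ha
          simp [Real.rpow_zero]
        exact Filter.Tendsto.congr' (Filter.EventuallyEq.symm this) tendsto_const_nhds
      · simp only [if_neg hqp]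
        have h0 : s q - s p < 0 := sub_neg.2 (hlt q hq hqp)
        have := (tendsto_rpow_neg_atTop (neg_pos.2 h0)).const_mul (coef q)
        simpa [mul_zero, neg_neg] using this
    simpa [Finset.sum_ite_eq' F p (fun _ => coef p), hp] using this
  -- find A > 1 with g A > 0
  have hev : ∀ᶠ a : ℝ in Filter.atTop, 0 < ∑ q ∈ F, coef q * a ^ (s q - s p) :=
    htend.eventually (eventually_gt_nhds hppos)
  obtain ⟨A, hA⟩ := (hev.and (Filter.eventually_gt_atTop 1)).exists
  obtain ⟨hApos, hA1⟩ := hA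
  have hA0 : (0:ℝ) < A := lt_trans one_pos hA1
  have hgA : 0 < g A := by
    have : g A = A ^ (s p) * ∑ q ∈ F, coef q * A ^ (s q - s p) := by
      rw [hg, Finset.mul_sum]
      refine Finset.sum_congr rfl fun q hq => ?_
      rw [Real.rpow_sub hA0]
      have hne : A ^ s p ≠ 0 := (Real.rpow_pos_of_pos hA0 _).ne'
      field_simp
    rw [this]
    exact mul_pos (Real.rpow_pos_of_pos hA0 _) hApos
  -- continuity of g on [1, A]
  have hcont : ContinuousOn g (Set.Icc 1 A) := by
    refine continuousOn_finset_sum F fun q hq => ?_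
    refine ContinuousOn.mul continuousOn_const ?_
    intro a ha
    have ha0 : a ≠ 0 := by
      have := ha.1; positivity
    exact (Real.continuousAt_rpow_const a (s q) (Or.inl ha0)).continuousWithinAt
  -- IVT
  have h0mem : (0:ℝ) ∈ Set.Icc (g 1) (g A) := ⟨hg1.le, hgA.le⟩
  obtain ⟨a, haI, hga⟩ := intermediate_value_Icc hA1.le hcont h0mem
  have ha0 : 0 < a := lt_of_lt_of_le one_pos haI.1
  refine ⟨fun i => a ^ n i, fun i => Real.rpow_pos_of_pos ha0 _, ?_⟩
  rw [heval a ha0, hga]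
end

section
/- Let F ⊂ ℕ^d be finite and p ∈ F. Then p is a vertex of conv(F) (with respect to some n ∈ ℝ^d) if and only if there exists a monotonic total preorder ⪯ on ℤ^d such that p is the strict maximum of F with respect to ⪯, i.e., q ≺ p for all q ∈ F \ {p}. -/
set_option maxHeartbeats 1000000

lemma linmap_eq_sum {K : Type*} [Field K] {k : ℕ} (f : (Fin k → K) →ₗ[K] K) (y : Fin k → K) :
    f y = ∑ i, y i * f (Pi.single i 1) := by
  have hy : y = ∑ i, y i • (Pi.single i (1 : K) : Fin k → K) := by
    funext j
    simp [Finset.sum_apply, Pi.single_apply]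
  conv_lhs => rw [hy]
  rw [map_sum]
  simp [smul_eq_mul]

lemma rat_span_comb {k : ℕ} (S : Finset (Fin k → ℚ)) (b : Fin k → ℚ)
    (h : (fun i => (b i : ℝ)) ∈ Submodule.span ℝ
      ((fun v : Fin k → ℚ => fun i => (v i : ℝ)) '' (S : Set (Fin k → ℚ)))) :
    ∃ c : (Fin k → ℚ) → ℚ, ∑ v ∈ S, c v • v = b := by
  by_contra hc
  push_neg at hc
  have hb : b ∉ Submodule.span ℚ (S : Set (Fin k → ℚ)) := by
    intro hmem
    obtain ⟨f, -, hf⟩ := Submodule.mem_span_finset.mp hmem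
    exact hc f hf
  obtain ⟨f, hf0, hfmap⟩ := Submodule.exists_dual_map_eq_bot_of_notMem hb inferInstance
  have hfS : ∀ v ∈ S, f v = 0 := by
    intro v hv
    have : f v ∈ (Submodule.span ℚ (S : Set (Fin k → ℚ))).map f :=
      Submodule.mem_map_of_mem (Submodule.subset_span hv)
    rw [hfmap] at this
    simpa using this
  set a : Fin k → ℚ := fun i => f (Pi.single i 1) with ha
  -- real functional
  set g : (Fin k → ℝ) →ₗ[ℝ] ℝ := ∑ i, (a i : ℝ) • LinearMap.proj i with hg
  have hgapp : ∀ x : Fin k → ℝ, g x = ∑ i, (a i : ℝ) * x i := by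
    intro x; simp [hg, LinearMap.sum_apply, LinearMap.proj_apply, smul_eq_mul]
  have hker : Submodule.span ℝ
      ((fun v : Fin k → ℚ => fun i => (v i : ℝ)) '' (S : Set (Fin k → ℚ))) ≤ LinearMap.ker g := by
    rw [Submodule.span_le]
    rintro x ⟨v, hv, rfl⟩
    have hfv : f v = 0 := hfS v hv
    have : (∑ i, a i * v i : ℚ) = 0 := by
      rw [← hfv, linmap_eq_sum f v]; ring_nf
      congr 1; funext i; ring
    simp only [SetLike.mem_coe, LinearMap.mem_ker]
    rw [hgapp]
    exact_mod_cast this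
  have : g (fun i => (b i : ℝ)) = 0 := hker h
  rw [hgapp] at this
  have hfb : (∑ i, a i * b i : ℚ) = 0 := by
    exact_mod_cast this
  apply hf0
  rw [linmap_eq_sum f b]
  rw [← hfb]
  congr 1; funext i; ring

lemma exists_pos_functional {k : ℕ} (U : Finset (Fin k → ℝ))
    (h0 : (0 : Fin k → ℝ) ∉ convexHull ℝ (U : Set (Fin k → ℝ))) :
    ∃ n : Fin k → ℝ, ∀ u ∈ U, 0 < ∑ i, n i * u i := by
  obtain ⟨f, c, hfc, hfs⟩ := geometric_hahn_banach_point_closed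
    (convex_convexHull ℝ _) ((U : Set (Fin k → ℝ)).toFinite.isClosed_convexHull ℝ) h0
  refine ⟨fun i => f (Pi.single i 1), fun u hu => ?_⟩
  have hu' : u ∈ convexHull ℝ (U : Set (Fin k → ℝ)) :=
    subset_convexHull ℝ _ hu
  have h1 : c < f u := hfs u hu'
  have h2 : f (0 : Fin k → ℝ) < c := hfc
  simp only [map_zero] at h2
  have := linmap_eq_sum (f.toLinearMap) u
  simp only [ContinuousLinearMap.coe_coe] at this
  calc (0:ℝ) < f u := lt_trans h2 h1
  _ = ∑ i, u i * f (Pi.single i 1) := this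
  _ = ∑ i, (fun i => f (Pi.single i 1)) i * u i := by
      congr 1; funext i; ring

lemma hull_max {d : ℕ} (F : Finset (Fin d → ℕ)) (p : Fin d → ℕ) (hp : p ∈ F) (n : Fin d → ℝ)
    (h : ∀ q ∈ F, q ≠ p → ∑ i, n i * (p i : ℝ) > ∑ i, n i * (q i : ℝ)) :
    ∀ x ∈ convexHull ℝ ((fun v : Fin d → ℕ => fun i => (v i : ℝ)) '' F),
      x ≠ (fun i => (p i : ℝ)) → ∑ i, n i * (p i : ℝ) > ∑ i, n i * x i := by
  classical
  set cst : (Fin d → ℕ) → (Fin d → ℝ) := fun v => fun i => (v i : ℝ) with hcst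
  have hinj : Function.Injective cst := by
    intro a b hab
    funext i
    have : (a i : ℝ) = (b i : ℝ) := congrFun hab i
    exact_mod_cast this
  set F' : Finset (Fin d → ℝ) := F.image cst with hF'
  have hset : (cst '' (F : Set (Fin d → ℕ))) = (F' : Set (Fin d → ℝ)) := by
    rw [hF', Finset.coe_image]
  intro x hx hxp
  rw [hset, Finset.convexHull_eq] at hx
  obtain ⟨w, hw0, hw1, hxc⟩ := hx
  rw [Finset.centerMass_eq_of_sum_1 _ _ hw1] at hxc
  simp only [id] at hxc
  set L : (Fin d → ℝ) → ℝ := fun y => ∑ i, n i * y i with hL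
  have hLx : L x = ∑ y ∈ F', w y * L y := by
    rw [hL, ← hxc]
    simp only [Finset.sum_apply, Pi.smul_apply, smul_eq_mul, Finset.mul_sum]
    rw [Finset.sum_comm]
    congr 1; funext y; congr 1; funext i; ring
  have hpF' : cst p ∈ F' := Finset.mem_image_of_mem _ hp
  have hkey : ∀ y ∈ F', y ≠ cst p → L y < L (cst p) := by
    intro y hy hyp
    obtain ⟨q, hq, rfl⟩ := Finset.mem_image.mp hy
    have hqp : q ≠ p := fun e => hyp (by rw [e])
    exact h q hq hqp
  have hLle : ∀ y ∈ F', L y ≤ L (cst p) := by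
    intro y hy
    by_cases hyp : y = cst p
    · rw [hyp]
    · exact le_of_lt (hkey y hy hyp)
  have hle : L x ≤ L (cst p) := by
    rw [hLx]
    calc ∑ y ∈ F', w y * L y ≤ ∑ y ∈ F', w y * L (cst p) := by
          apply Finset.sum_le_sum
          intro y hy
          exact mul_le_mul_of_nonneg_left (hLle y hy) (hw0 y hy)
    _ = L (cst p) := by rw [← Finset.sum_mul, hw1, one_mul]
  have hne : x ≠ cst p := hxp
  rcases lt_or_eq_of_le hle with hlt | heq
  · exact hlt
  · exfalso
    -- equality forces w y = 0 for y ≠ cst p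
    have hzero : ∀ y ∈ F', y ≠ cst p → w y = 0 := by
      have hsum0 : ∑ y ∈ F', w y * (L (cst p) - L y) = 0 := by
        have : ∑ y ∈ F', w y * (L (cst p) - L y)
            = (∑ y ∈ F', w y) * L (cst p) - ∑ y ∈ F', w y * L y := by
          rw [Finset.sum_mul, ← Finset.sum_sub_distrib]
          congr 1; funext y; ring
        rw [this, hw1, one_mul, ← hLx, heq, sub_self]
      intro y hy hyp
      have hterm := (Finset.sum_eq_zero_iff_of_nonneg (fun y hy =>
        mul_nonneg (hw0 y hy) (sub_nonneg.mpr (hLle y hy)))).mp hsum0 y hy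
      have hpos : 0 < L (cst p) - L y := sub_pos.mpr (hkey y hy hyp)
      by_contra hw
      have : 0 < w y := lt_of_le_of_ne (hw0 y hy) (Ne.symm hw)
      nlinarith
    apply hne
    have hx1 : x = ∑ y ∈ F', w y • y := hxc.symm
    have hwsum : w (cst p) = 1 := by
      rw [← hw1]
      rw [Finset.sum_eq_single (cst p)]
      · intro y hy hyp; exact hzero y hy hyp
      · intro habs; exact absurd hpF' habs
    rw [hx1, Finset.sum_eq_single (cst p)]
    · rw [hwsum, one_smul]
    · intro y hy hyp; rw [hzero y hy hyp, zero_smul]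
    · intro habs; exact absurd hpF' habs

section
variable {d : ℕ} (r : (Fin d → ℤ) → (Fin d → ℤ) → Prop)

lemma r_add_nonneg (htrans : ∀ x y z, r x y → r y z → r x z)
    (hmono : ∀ x y z, r x y → r (x + z) (y + z))
    {x y : Fin d → ℤ} (hx : r 0 x) (hy : r 0 y) : r 0 (x + y) := by
  have h1 : r y (x + y) := by
    have := hmono 0 x y hx
    rwa [zero_add] at this
  exact htrans _ _ _ hy h1

lemma r_add_pos (htrans : ∀ x y z, r x y → r y z → r x z)
    (hmono : ∀ x y z, r x y → r (x + z) (y + z))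
    {x y : Fin d → ℤ} (hx : ¬ r x 0) (hy : r 0 y) : ¬ r (x + y) 0 := by
  intro habs
  apply hx
  have h1 : r x (x + y) := by
    have := hmono 0 y x hy
    rwa [zero_add, add_comm y x] at this
  exact htrans _ _ _ h1 habs

lemma r_nsmul_nonneg (hrefl : ∀ x, r x x) (htrans : ∀ x y z, r x y → r y z → r x z)
    (hmono : ∀ x y z, r x y → r (x + z) (y + z))
    {x : Fin d → ℤ} (hx : r 0 x) (m : ℕ) : r 0 (m • x) := by
  induction m with
  | zero => simpa using hrefl 0
  | succ m ih =>
      have h : (m + 1) • x = m • x + x := by rw [succ_nsmul]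
      rw [h]
      exact r_add_nonneg r htrans hmono ih hx

lemma r_nsmul_pos (hrefl : ∀ x, r x x) (htrans : ∀ x y z, r x y → r y z → r x z)
    (hmono : ∀ x y z, r x y → r (x + z) (y + z))
    {x : Fin d → ℤ} (hx0 : r 0 x) (hx : ¬ r x 0) {m : ℕ} (hm : 0 < m) :
    ¬ r (m • x) 0 := by
  obtain ⟨m, rfl⟩ := Nat.exists_eq_succ_of_ne_zero hm.ne'
  have h : (m + 1) • x = x + m • x := by rw [succ_nsmul, add_comm]
  rw [h]
  exact r_add_pos r htrans hmono hx (r_nsmul_nonneg r hrefl htrans hmono hx0 m)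

lemma r_sum_lemma (hrefl : ∀ x, r x x) (htrans : ∀ x y z, r x y → r y z → r x z)
    (hmono : ∀ x y z, r x y → r (x + z) (y + z))
    (s : Finset (Fin d → ℚ)) (k : (Fin d → ℚ) → ℕ)
    (hz : ∀ v ∈ s, ∃ z : Fin d → ℤ, (∀ i, (z i : ℚ) = v i) ∧ r 0 z ∧ ¬ r z 0) :
    ∃ z : Fin d → ℤ, (∀ i, (z i : ℚ) = ∑ v ∈ s, (k v : ℚ) * v i) ∧ r 0 z ∧
      ((∃ v ∈ s, 0 < k v) → ¬ r z 0) := by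
  classical
  induction s using Finset.induction_on with
  | empty =>
      exact ⟨0, by simp, hrefl 0, by simp⟩
  | @insert a s ha ih =>
      obtain ⟨za, hza, hza0, hzap⟩ := hz a (Finset.mem_insert_self a s)
      obtain ⟨zs, hzs, hzs0, hzsp⟩ := ih (fun v hv => hz v (Finset.mem_insert_of_mem hv))
      refine ⟨k a • za + zs, ?_, ?_, ?_⟩
      · intro i
        rw [Finset.sum_insert ha]
        simp only [Pi.add_apply, Pi.smul_apply, smul_eq_mul]
        push_cast [nsmul_eq_mul]
        rw [hza i, hzs i]
      · exact r_add_nonneg r htrans hmono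
          (r_nsmul_nonneg r hrefl htrans hmono hza0 (k a)) hzs0
      · rintro ⟨v, hv, hkv⟩
        rcases Finset.mem_insert.mp hv with rfl | hvs
        · exact r_add_pos r htrans hmono
            (r_nsmul_pos r hrefl htrans hmono hza0 hzap hkv) hzs0
        · rw [add_comm]
          exact r_add_pos r htrans hmono (hzsp ⟨v, hvs, hkv⟩)
            (r_nsmul_nonneg r hrefl htrans hmono hza0 (k a))
end

lemma backward_main {d : ℕ} (F : Finset (Fin d → ℕ)) (p : Fin d → ℕ)
    (r : (Fin d → ℤ) → (Fin d → ℤ) → Prop)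
    (hrefl : ∀ x, r x x) (htrans : ∀ x y z, r x y → r y z → r x z)
    (hmono : ∀ x y z, r x y → r (x + z) (y + z))
    (hmax : ∀ q ∈ F, q ≠ p →
        r (fun i => (q i : ℤ)) (fun i => (p i : ℤ)) ∧
        ¬ r (fun i => (p i : ℤ)) (fun i => (q i : ℤ))) :
    ∃ n : Fin d → ℝ, ∀ q ∈ F, q ≠ p →
      ∑ i, n i * (p i : ℝ) > ∑ i, n i * (q i : ℝ) := by
  classical
  set ψ : (Fin d → ℕ) → (Fin d → ℚ) := fun q i => (p i : ℚ) - (q i : ℚ) with hψ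
  set cq : (Fin d → ℚ) → (Fin d → ℝ) := fun v i => (v i : ℝ) with hcq
  have hcqinj : Function.Injective cq := by
    intro a b hab
    funext i
    have : (a i : ℝ) = (b i : ℝ) := congrFun hab i
    exact_mod_cast this
  set Sq : Finset (Fin d → ℚ) := (F.erase p).image ψ with hSq
  set U : Finset (Fin d → ℝ) := Sq.image cq with hU
  -- every element of Sq has a strictly positive integer representative
  have hpos : ∀ v ∈ Sq, ∃ z : Fin d → ℤ, (∀ i, (z i : ℚ) = v i) ∧ r 0 z ∧ ¬ r z 0 := by
    intro v hv
    obtain ⟨q, hq, rfl⟩ := Finset.mem_image.mp hv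
    have hqF : q ∈ F := Finset.mem_of_mem_erase hq
    have hqp : q ≠ p := Finset.ne_of_mem_erase hq
    obtain ⟨h1, h2⟩ := hmax q hqF hqp
    set qZ : Fin d → ℤ := fun i => (q i : ℤ) with hqZ
    set pZ : Fin d → ℤ := fun i => (p i : ℤ) with hpZ
    refine ⟨pZ - qZ, ?_, ?_, ?_⟩
    · intro i
      simp only [Pi.sub_apply, hpZ, hqZ, hψ]
      push_cast
      ring
    · have := hmono qZ pZ (-qZ) h1
      have e1 : qZ + -qZ = 0 := by funext i; simp
      have e2 : pZ + -qZ = pZ - qZ := by funext i; simp [sub_eq_add_neg]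
      rwa [e1, e2] at this
    · intro habs
      have := hmono (pZ - qZ) 0 qZ habs
      have e1 : pZ - qZ + qZ = pZ := by funext i; simp
      have e2 : (0 : Fin d → ℤ) + qZ = qZ := by funext i; simp
      rw [e1, e2] at this
      exact h2 this
  have h0 : (0 : Fin d → ℝ) ∉ convexHull ℝ (U : Set (Fin d → ℝ)) := by
    intro h0'
    rw [convexHull_eq_union] at h0'
    simp only [Set.mem_iUnion] at h0'
    obtain ⟨t, htU, hai, h0t⟩ := h0'
    rw [Finset.convexHull_eq] at h0t
    obtain ⟨w, hw0, hw1, hcm⟩ := h0t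
    rw [Finset.centerMass_eq_of_sum_1 _ _ hw1] at hcm
    simp only [id] at hcm
    -- rational version of t
    set s : Finset (Fin d → ℚ) := Sq.filter (fun v => cq v ∈ t) with hs
    have hts : t = s.image cq := by
      ext y
      constructor
      · intro hy
        have hyU : y ∈ U := htU hy
        obtain ⟨v, hv, rfl⟩ := Finset.mem_image.mp hyU
        exact Finset.mem_image_of_mem _ (Finset.mem_filter.mpr ⟨hv, hy⟩)
      · intro hy
        obtain ⟨v, hv, rfl⟩ := Finset.mem_image.mp hy
        exact (Finset.mem_filter.mp hv).2
    -- the hat construction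
    set hat : (Fin d → ℚ) → (Fin (d+1) → ℚ) := fun v => Fin.cons 1 v with hhat
    set hatR : (Fin d → ℝ) → (Fin (d+1) → ℝ) := fun v => Fin.cons 1 v with hhatR
    set cq' : (Fin (d+1) → ℚ) → (Fin (d+1) → ℝ) := fun v i => (v i : ℝ) with hcq'
    have hcomm : ∀ v : Fin d → ℚ, cq' (hat v) = hatR (cq v) := by
      intro v
      funext i
      refine Fin.cases ?_ ?_ i
      · simp [hhat, hhatR, hcq', hcq]
      · intro j; simp [hhat, hhatR, hcq', hcq]
    have hhatinj : Function.Injective hat := by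
      intro a b hab
      have := congrArg Fin.tail hab
      simpa [hhat, Fin.tail_cons] using this
    set Shat : Finset (Fin (d+1) → ℚ) := s.image hat with hShat
    set b : Fin (d+1) → ℚ := Fin.cons 1 0 with hb
    have hbmem : (fun i => (b i : ℝ)) ∈ Submodule.span ℝ
        ((fun v : Fin (d+1) → ℚ => fun i => (v i : ℝ)) '' (Shat : Set (Fin (d+1) → ℚ))) := by
      have hrepr : (fun i => (b i : ℝ)) = ∑ y ∈ t, w y • hatR y := by
        funext i
        refine Fin.cases ?_ ?_ i
        · simp only [hb, Fin.cons_zero, Rat.cast_one, Finset.sum_apply, Pi.smul_apply,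
            smul_eq_mul, hhatR]
          simp only [Fin.cons_zero, mul_one]
          exact hw1.symm
        · intro j
          simp only [hb, Fin.cons_succ, Pi.zero_apply, Rat.cast_zero, Finset.sum_apply,
            Pi.smul_apply, smul_eq_mul, hhatR, Fin.cons_succ]
          have := congrFun hcm j
          simp only [Finset.sum_apply, Pi.smul_apply, smul_eq_mul, Pi.zero_apply] at this
          exact this.symm
      rw [hrepr]
      apply Submodule.sum_mem
      intro y hy
      apply Submodule.smul_mem
      apply Submodule.subset_span
      rw [hts] at hy
      obtain ⟨v, hv, rfl⟩ := Finset.mem_image.mp hy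
      refine ⟨hat v, ?_, ?_⟩
      · exact Finset.mem_coe.mpr (Finset.mem_image_of_mem _ hv)
      · rw [← hcomm v]
    obtain ⟨c, hc⟩ := rat_span_comb Shat b hbmem
    rw [hShat, Finset.sum_image (fun x _ y _ h => hhatinj h)] at hc
    set m : (Fin d → ℚ) → ℚ := fun v => c (hat v) with hm
    have hm1 : ∑ v ∈ s, m v = 1 := by
      have := congrFun hc 0
      simp only [Finset.sum_apply, Pi.smul_apply, smul_eq_mul, hhat, Fin.cons_zero, hb,
        mul_one] at this
      exact this
    have hm0 : ∀ j, ∑ v ∈ s, m v * v j = 0 := by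
      intro j
      have := congrFun hc (Fin.succ j)
      simp only [Finset.sum_apply, Pi.smul_apply, smul_eq_mul, hhat, Fin.cons_succ, hb,
        Pi.zero_apply] at this
      exact this
    have hsmem : ∀ v : Fin d → ℚ, v ∈ s → cq v ∈ t := by
      intro v hv; exact (Finset.mem_filter.mp hv).2
    have hembinj : Function.Injective
        (fun v : {x // x ∈ s} => (⟨cq ↑v, hsmem ↑v v.2⟩ : {x // x ∈ t})) := by
      intro a b hab
      apply Subtype.ext
      exact hcqinj (congrArg Subtype.val hab)
    have haiS : AffineIndependent ℝ (fun v : {x // x ∈ s} => cq ↑v) := by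
      have h := hai.comp_embedding ⟨_, hembinj⟩
      exact h
    have hWsum : ∑ v ∈ s.attach, (w (cq ↑v) - ((m ↑v : ℚ) : ℝ)) = 0 := by
      rw [Finset.sum_sub_distrib]
      have e1 : ∑ v ∈ s.attach, w (cq ↑v) = ∑ y ∈ t, w y := by
        rw [Finset.sum_attach s (fun x => w (cq x)), hts,
          Finset.sum_image (fun x _ y _ h => hcqinj h)]
      have e2 : ∑ v ∈ s.attach, ((m ↑v : ℚ) : ℝ) = ((∑ v ∈ s, m v : ℚ) : ℝ) := by
        rw [Finset.sum_attach s (fun v => ((m v : ℚ) : ℝ))]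
        push_cast
        rfl
      rw [e1, hw1, e2, hm1]
      norm_num
    have hWcomb : ∑ v ∈ s.attach, (w (cq ↑v) - ((m ↑v : ℚ) : ℝ)) • cq ↑v = 0 := by
      simp only [sub_smul]
      rw [Finset.sum_sub_distrib]
      have e1 : ∑ v ∈ s.attach, w (cq ↑v) • cq ↑v = ∑ y ∈ t, w y • y := by
        rw [Finset.sum_attach s (fun x => w (cq x) • cq x), hts,
          Finset.sum_image (fun x _ y _ h => hcqinj h)]
      have e2 : ∑ v ∈ s.attach, ((m ↑v : ℚ) : ℝ) • cq ↑v = 0 := by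
        rw [Finset.sum_attach s (fun v => ((m v : ℚ) : ℝ) • cq v)]
        funext j
        simp only [Finset.sum_apply, Pi.smul_apply, smul_eq_mul, Pi.zero_apply, hcq]
        calc ∑ v ∈ s, (m v : ℝ) * (v j : ℝ) = ((∑ v ∈ s, m v * v j : ℚ) : ℝ) := by
              push_cast; rfl
        _ = 0 := by rw [hm0 j]; norm_num
      rw [e1, hcm, e2, sub_zero]
    have key := affineIndependent_iff.mp haiS s.attach
      (fun v => w (cq ↑v) - ((m ↑v : ℚ) : ℝ)) hWsum hWcomb
    have hmw : ∀ v ∈ s, ((m v : ℚ) : ℝ) = w (cq v) := by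
      intro v hv
      have := key ⟨v, hv⟩ (Finset.mem_attach _ _)
      have := sub_eq_zero.mp this
      linarith
    have hmnn : ∀ v ∈ s, 0 ≤ m v := by
      intro v hv
      have h1 : (0 : ℝ) ≤ ((m v : ℚ) : ℝ) := by
        rw [hmw v hv]
        exact hw0 _ (hsmem v hv)
      exact_mod_cast h1
    -- clear denominators
    set D : ℕ := ∏ v ∈ s, (m v).den with hD
    have hDpos : 0 < D := Finset.prod_pos (fun v _ => (m v).pos)
    set k : (Fin d → ℚ) → ℕ := fun v => (m v).num.toNat * (D / (m v).den) with hkdef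
    have hk : ∀ v ∈ s, (k v : ℚ) = (D : ℚ) * m v := by
      intro v hv
      have hdvd : (m v).den ∣ D := Finset.dvd_prod_of_mem _ hv
      have hden0 : ((m v).den : ℚ) ≠ 0 := by
        exact_mod_cast (m v).den_nz
      have hnum : ((m v).num.toNat : ℤ) = (m v).num :=
        Int.toNat_of_nonneg (Rat.num_nonneg.mpr (hmnn v hv))
      have h1 : (k v : ℚ) = ((m v).num.toNat : ℚ) * ((D : ℚ) / ((m v).den : ℚ)) := by
        simp only [hkdef]
        rw [Nat.cast_mul, Nat.cast_div hdvd hden0]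
      have h2 : ((m v).num.toNat : ℚ) = ((m v).num : ℚ) := by
        exact_mod_cast hnum
      rw [h1, h2]
      conv_rhs => rw [← Rat.num_div_den (m v)]
      ring
    have hksum0 : ∀ i, ∑ v ∈ s, (k v : ℚ) * v i = 0 := by
      intro i
      calc ∑ v ∈ s, (k v : ℚ) * v i = ∑ v ∈ s, (D : ℚ) * (m v * v i) := by
            apply Finset.sum_congr rfl
            intro v hv
            rw [hk v hv]; ring
      _ = (D : ℚ) * ∑ v ∈ s, m v * v i := by rw [Finset.mul_sum]
      _ = 0 := by rw [hm0 i]; ring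
    have hkpos : ∃ v ∈ s, 0 < k v := by
      by_contra hall
      push_neg at hall
      have hzero : ∑ v ∈ s, (k v : ℚ) = 0 := by
        apply Finset.sum_eq_zero
        intro v hv
        have := Nat.le_zero.mp (hall v hv)
        simp [this]
      have hDq : ∑ v ∈ s, (k v : ℚ) = (D : ℚ) := by
        calc ∑ v ∈ s, (k v : ℚ) = ∑ v ∈ s, (D : ℚ) * m v :=
              Finset.sum_congr rfl (fun v hv => hk v hv)
        _ = (D : ℚ) * ∑ v ∈ s, m v := (Finset.mul_sum _ _ _).symm
        _ = D := by rw [hm1]; ring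
      rw [hzero] at hDq
      have : (D : ℚ) ≠ 0 := by
        exact_mod_cast hDpos.ne'
      exact this hDq.symm
    obtain ⟨z, hzc, hz0, hzp⟩ := r_sum_lemma r hrefl htrans hmono s k
      (fun v hv => hpos v (Finset.mem_filter.mp hv).1)
    have hzeq : z = 0 := by
      funext i
      have : (z i : ℚ) = 0 := by rw [hzc i, hksum0 i]
      exact_mod_cast this
    rw [hzeq] at hzp
    exact hzp hkpos (hrefl 0)
  obtain ⟨n, hn⟩ := exists_pos_functional U h0
  refine ⟨n, fun q hqF hqp => ?_⟩
  have hmem : cq (ψ q) ∈ U :=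
    Finset.mem_image_of_mem _ (Finset.mem_image_of_mem _ (Finset.mem_erase.mpr ⟨hqp, hqF⟩))
  have hpos' := hn _ hmem
  have hre : ∑ i, n i * cq (ψ q) i = ∑ i, (n i * (p i : ℝ) - n i * (q i : ℝ)) := by
    apply Finset.sum_congr rfl
    intro i _
    simp only [hcq, hψ]
    push_cast
    ring
  rw [hre, Finset.sum_sub_distrib] at hpos'
  linarith


/-- p ∈ F ⊂ ℕ^d is a vertex of conv(F) w.r.t. some n ∈ ℝ^d iff there is a
monotonic total preorder ⪯ on ℤ^d such that p is the strict maximum of F w.r.t. ⪯. -/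
theorem vertex_iff_preorder_max {d : ℕ} (F : Finset (Fin d → ℕ))
    (p : Fin d → ℕ) (hp : p ∈ F) :
    (∃ n : Fin d → ℝ,
      ∀ q ∈ convexHull ℝ ((fun v : Fin d → ℕ => fun i => (v i : ℝ)) '' F),
        q ≠ (fun i => (p i : ℝ)) → ∑ i, n i * (p i : ℝ) > ∑ i, n i * q i) ↔
    (∃ r : (Fin d → ℤ) → (Fin d → ℤ) → Prop,
      (∀ x, r x x) ∧
      (∀ x y z, r x y → r y z → r x z) ∧
      (∀ x y, r x y ∨ r y x) ∧
      (∀ x y z, r x y → r (x + z) (y + z)) ∧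
      (∀ q ∈ F, q ≠ p →
        r (fun i => (q i : ℤ)) (fun i => (p i : ℤ)) ∧
        ¬ r (fun i => (p i : ℤ)) (fun i => (q i : ℤ)))) := by
  constructor
  · rintro ⟨n, hn⟩
    refine ⟨fun x y => ∑ i, n i * (x i : ℝ) ≤ ∑ i, n i * (y i : ℝ),
      fun x => le_refl _, fun x y z => le_trans, fun x y => le_total _ _, ?_, ?_⟩
    · intro x y z hxy
      have ex : ∀ u z : Fin d → ℤ, ∑ i, n i * (((u + z) i : ℤ) : ℝ)
          = ∑ i, n i * ((u i : ℤ) : ℝ) + ∑ i, n i * ((z i : ℤ) : ℝ) := by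
        intro u z
        rw [← Finset.sum_add_distrib]
        apply Finset.sum_congr rfl
        intro i _
        simp only [Pi.add_apply]
        push_cast
        ring
      rw [ex, ex]
      linarith
    · intro q hq hqp
      have hmem : (fun i => (q i : ℝ)) ∈
          convexHull ℝ ((fun v : Fin d → ℕ => fun i => (v i : ℝ)) '' F) :=
        subset_convexHull ℝ _ ⟨q, hq, rfl⟩
      have hne : (fun i => (q i : ℝ)) ≠ (fun i => (p i : ℝ)) := by
        intro habs
        apply hqp
        funext i
        have : (q i : ℝ) = (p i : ℝ) := congrFun habs i
        exact_mod_cast this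
      have hlt := hn _ hmem hne
      constructor
      · apply le_of_lt
        have e1 : ∑ i, n i * ((q i : ℤ) : ℝ) = ∑ i, n i * (q i : ℝ) := by
          apply Finset.sum_congr rfl; intro i _; norm_num
        have e2 : ∑ i, n i * ((p i : ℤ) : ℝ) = ∑ i, n i * (p i : ℝ) := by
          apply Finset.sum_congr rfl; intro i _; norm_num
        rw [e1, e2]
        exact hlt
      · rw [not_le]
        have e1 : ∑ i, n i * ((q i : ℤ) : ℝ) = ∑ i, n i * (q i : ℝ) := by
          apply Finset.sum_congr rfl; intro i _; norm_num
        have e2 : ∑ i, n i * ((p i : ℤ) : ℝ) = ∑ i, n i * (p i : ℝ) := by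
          apply Finset.sum_congr rfl; intro i _; norm_num
        rw [e1, e2]
        exact hlt
  · rintro ⟨r, hrefl, htrans, _htotal, hmono, hmax⟩
    obtain ⟨n, hn⟩ := backward_main F p r hrefl htrans hmono hmax
    exact ⟨n, hull_max F p hp n hn⟩
end

section
/- Let f₁,…,f_m be polynomials over ℝ in d variables and suppose (p₁,…,p_m) is a positive vertex cluster with respect to n ∈ ℝ^d, i.e., each p_i lies in the positive frame of f_i (coefficient (f_i)_{p_i} > 0) and is a vertex of the Newton polytope of f_i with respect to the common vector n. Then there exists a₀ > 0 such that for all a ≥ a₀: f_i(a^n) > 0 for all i = 1,…,m. In particular the system f₁ > 0 ∧ … ∧ f_m > 0 has a solution with all coordinates positive. -/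
open Filter Real Topology

private lemma prod_rpow_eq {d : ℕ} (n : Fin d → ℝ) (q : Fin d → ℕ) {a : ℝ} (ha : 0 < a) :
    ∏ j, (a ^ n j) ^ q j = a ^ (∑ j, n j * (q j : ℝ)) := by
  rw [Real.rpow_sum_of_pos ha]
  refine Finset.prod_congr rfl fun j _ => ?_
  rw [Real.rpow_mul ha.le, Real.rpow_natCast]

/-- A positive vertex cluster w.r.t. n yields a₀ > 0 with
f_i(a^n) > 0 for all a ≥ a₀ and all i; in particular the system f₁ > 0 ∧ … ∧ f_m > 0
has a solution with all coordinates positive. -/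
theorem positive_vertex_cluster_sat {d m : ℕ}
    (F : Fin m → Finset (Fin d → ℕ)) (coef : Fin m → (Fin d → ℕ) → ℝ)
    (hcoef : ∀ i, ∀ q ∈ F i, coef i q ≠ 0)
    (p : Fin m → (Fin d → ℕ)) (hp : ∀ i, p i ∈ F i)
    (hppos : ∀ i, 0 < coef i (p i)) (n : Fin d → ℝ)
    (hvert : ∀ i, ∀ q ∈ F i, q ≠ p i →
      ∑ j, n j * (p i j : ℝ) > ∑ j, n j * (q j : ℝ)) :
    (∃ a₀ : ℝ, 0 < a₀ ∧ ∀ a : ℝ, a₀ ≤ a → ∀ i : Fin m,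
      0 < ∑ q ∈ F i, coef i q * ∏ j, (a ^ n j) ^ q j) ∧
    (∃ x : Fin d → ℝ, (∀ j, 0 < x j) ∧
      ∀ i : Fin m, 0 < ∑ q ∈ F i, coef i q * ∏ j, x j ^ q j) := by
  set e : Fin m → (Fin d → ℕ) → ℝ := fun i q => ∑ j, n j * (q j : ℝ) with he
  have key : ∀ᶠ a : ℝ in atTop, ∀ i : Fin m,
      0 < ∑ q ∈ F i, coef i q * ∏ j, (a ^ n j) ^ q j := by
    rw [eventually_all]
    intro i
    have htend : Tendsto (fun a : ℝ => ∑ q ∈ F i, coef i q * a ^ (e i q - e i (p i)))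
        atTop (𝓝 (∑ q ∈ F i, if q = p i then coef i (p i) else 0)) := by
      refine tendsto_finset_sum _ fun q hq => ?_
      by_cases hqp : q = p i
      · simp only [if_pos hqp, hqp, sub_self]
        have : (fun a : ℝ => coef i (p i) * a ^ (0:ℝ)) =ᶠ[atTop] fun _ => coef i (p i) := by
          filter_upwards with a; rw [Real.rpow_zero, mul_one]
        exact Tendsto.congr' this.symm tendsto_const_nhds
      · simp only [if_neg hqp]
        have hneg : 0 < e i (p i) - e i q := sub_pos.mpr (hvert i q hq hqp)
        have := (tendsto_rpow_neg_atTop hneg).const_mul (coef i q)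
        simpa [neg_sub] using this
    have hsum : (∑ q ∈ F i, if q = p i then coef i (p i) else 0) = coef i (p i) := by
      rw [Finset.sum_ite_eq' (F i) (p i) (fun _ => coef i (p i))]
      simp [hp i]
    rw [hsum] at htend
    have hev := htend.eventually (eventually_gt_nhds (hppos i))
    filter_upwards [hev, eventually_gt_atTop (0:ℝ)] with a hpos ha0
    have hrw : ∀ q ∈ F i, coef i q * ∏ j, (a ^ n j) ^ q j
        = a ^ (e i (p i)) * (coef i q * a ^ (e i q - e i (p i))) := by
      intro q _
      rw [prod_rpow_eq n q ha0]
      rw [mul_comm (a ^ e i (p i)), mul_assoc, ← Real.rpow_add ha0]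
      ring_nf
      rfl
    rw [Finset.sum_congr rfl hrw, ← Finset.mul_sum]
    exact mul_pos (Real.rpow_pos_of_pos ha0 _) hpos
  obtain ⟨b, hb⟩ := key.exists_forall_of_atTop
  refine ⟨⟨max b 1, lt_of_lt_of_le one_pos (le_max_right _ _), fun a ha i =>
    hb a (le_trans (le_max_left _ _) ha) i⟩, ?_⟩
  refine ⟨fun j => (max b 1) ^ n j, fun j =>
    Real.rpow_pos_of_pos (lt_of_lt_of_le one_pos (le_max_right _ _)) _, fun i =>
    hb (max b 1) (le_max_left _ _) i⟩
end

section
/- Let f be a polynomial in d variables with frame F, positive frame F⁺ and negative frame F⁻. The following are equivalent: (i) some p ∈ F⁺ is a vertex of conv(F) with respect to some n ∈ ℝ^d; (ii) some p' ∈ F⁺ is a vertex of conv(F⁻ ∪ {p'}) with respect to some n' ∈ ℝ^d. -/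
noncomputable instance {d : ℕ} : LinearOrder (Lex (Fin d → ℕ)) :=
  @Pi.Lex.linearOrder.{0,0} (Fin d) (fun _ => ℕ) inferInstance
    (IsWellOrder.toIsWellFounded (r := (· < ·)))
    (fun _ => inferInstance)

/-- Every nonempty finite subset of ℕ^d has an exposed point. -/
lemma exists_exposed_point {d : ℕ} (S : Finset (Fin d → ℕ)) (hS : S.Nonempty) :
    ∃ p ∈ S, ∃ n : Fin d → ℝ,
      ∀ q ∈ S, q ≠ p → ∑ i, n i * (p i : ℝ) > ∑ i, n i * (q i : ℝ) := by
  classical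
  set B : ℕ := S.sup (fun q => Finset.univ.sup q) with hB
  set M : ℝ := ((B : ℝ) + 1) * (d + 1) with hMdef
  have hM1 : (1 : ℝ) ≤ M := by
    have h1 : (0:ℝ) ≤ (B:ℝ) := Nat.cast_nonneg B
    have h2 : (0:ℝ) ≤ (d:ℝ) := Nat.cast_nonneg d
    nlinarith
  have hM0 : (0 : ℝ) < M := lt_of_lt_of_le one_pos hM1
  have hBd : (B : ℝ) * d < M := by
    have : (0:ℝ) ≤ (B:ℝ) := Nat.cast_nonneg B
    have : (0:ℝ) ≤ (d:ℝ) := Nat.cast_nonneg d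
    nlinarith
  obtain ⟨p, hpS, hmax⟩ := S.exists_max_image (fun q => (toLex q : Lex (Fin d → ℕ))) hS
  refine ⟨p, hpS, fun j => M ^ (d - (j : ℕ)), fun q hqS hqp => ?_⟩
  have hlt : (toLex q : Lex (Fin d → ℕ)) < toLex p :=
    lt_of_le_of_ne (hmax q hqS) (fun h => hqp (toLex.injective h))
  obtain ⟨i, hji, hqi⟩ := hlt
  -- bound on coordinates
  have hcoord : ∀ r ∈ S, ∀ j : Fin d, r j ≤ B := fun r hr j =>
    le_trans (Finset.le_sup (Finset.mem_univ j)) (Finset.le_sup (f := fun q => Finset.univ.sup q) hr)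
  rw [gt_iff_lt, ← sub_pos, ← Finset.sum_sub_distrib]
  have hsum : ∑ j : Fin d, (M ^ (d - (j:ℕ)) * (p j : ℝ) - M ^ (d - (j:ℕ)) * (q j : ℝ))
      = ∑ j : Fin d, M ^ (d - (j:ℕ)) * ((p j : ℝ) - (q j : ℝ)) := by
    apply Finset.sum_congr rfl; intro j _; ring
  rw [hsum]
  have hid : (i : ℕ) < d := i.isLt
  obtain ⟨k, hk⟩ : ∃ k, d - (i:ℕ) = k + 1 := ⟨d - (i:ℕ) - 1, by omega⟩
  -- decompose: sum = term at i + rest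
  rw [← Finset.add_sum_erase _ _ (Finset.mem_univ i)]
  have hterm : M ^ (d - (i:ℕ)) ≤ M ^ (d - (i:ℕ)) * ((p i : ℝ) - (q i : ℝ)) := by
    have h1 : (1:ℝ) ≤ (p i : ℝ) - (q i : ℝ) := by
      have := hqi
      have : (q i : ℝ) + 1 ≤ (p i : ℝ) := by exact_mod_cast hqi
      linarith
    nlinarith [pow_pos hM0 (d - (i:ℕ))]
  have hrest : ∀ j ∈ Finset.univ.erase i,
      -((B:ℝ) * M ^ (k)) ≤ M ^ (d - (j:ℕ)) * ((p j : ℝ) - (q j : ℝ)) := by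
    intro j hj
    rcases lt_trichotomy j i with hji' | rfl | hij
    · have hqj : q j = p j := hji j hji'
      rw [hqj, sub_self, mul_zero]
      have : (0:ℝ) ≤ (B:ℝ) * M ^ k := by positivity
      linarith
    · exact absurd rfl (Finset.ne_of_mem_erase hj)
    · have hpow : M ^ (d - (j:ℕ)) ≤ M ^ (k) := by
        apply pow_le_pow_right₀ hM1
        have : (i:ℕ) < (j:ℕ) := hij
        omega
      have hdiff : -(B:ℝ) ≤ (p j : ℝ) - (q j : ℝ) := by
        have h1 : (q j : ℝ) ≤ (B:ℝ) := by exact_mod_cast hcoord q hqS j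
        have h2 : (0:ℝ) ≤ (p j : ℝ) := Nat.cast_nonneg _
        linarith
      have hp0 : (0:ℝ) < M ^ (d - (j:ℕ)) := pow_pos hM0 _
      nlinarith [pow_pos hM0 (k)]
  have hrestsum : -((d:ℝ) * ((B:ℝ) * M ^ (k)))
      ≤ ∑ j ∈ Finset.univ.erase i, M ^ (d - (j:ℕ)) * ((p j : ℝ) - (q j : ℝ)) := by
    calc -((d:ℝ) * ((B:ℝ) * M ^ (k)))
        ≤ ((Finset.univ.erase i).card : ℝ) * (-((B:ℝ) * M ^ (k))) := by
          have hcard : ((Finset.univ.erase i).card : ℝ) ≤ (d:ℝ) := by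
            have := Finset.card_erase_le (a := i) (s := (Finset.univ : Finset (Fin d)))
            have : (Finset.univ.erase i).card ≤ d := by
              simpa [Finset.card_univ] using this
            exact_mod_cast this
          have hpos : (0:ℝ) ≤ (B:ℝ) * M ^ (k) := by positivity
          nlinarith
      _ ≤ _ := by
          rw [← nsmul_eq_mul]
          exact Finset.card_nsmul_le_sum _ _ _ hrest
  have hMM : M ^ (d - (i:ℕ)) = M * M ^ (k) := by
    rw [hk, pow_succ]; ring
  have : (d:ℝ) * ((B:ℝ) * M ^ (k)) < M ^ (d - (i:ℕ)) := by
    rw [hMM]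
    have hp0 : (0:ℝ) < M ^ (k) := pow_pos hM0 _
    nlinarith
  linarith


/-- Some p ∈ F⁺ is a vertex of conv(F) w.r.t. some n iff some p' ∈ F⁺ is
a vertex of conv(F⁻ ∪ {p'}) w.r.t. some n'. -/
theorem positive_vertex_iff_vertex_wrt_negative_frame {d : ℕ}
    (F : Finset (Fin d → ℕ)) (coef : (Fin d → ℕ) → ℝ)
    (hcoef : ∀ q ∈ F, coef q ≠ 0) :
    (∃ p ∈ F.filter (fun q => 0 < coef q), ∃ n : Fin d → ℝ,
      ∀ q ∈ F, q ≠ p → ∑ i, n i * (p i : ℝ) > ∑ i, n i * (q i : ℝ)) ↔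
    (∃ p' ∈ F.filter (fun q => 0 < coef q), ∃ n' : Fin d → ℝ,
      ∀ q ∈ F.filter (fun q => coef q < 0), q ≠ p' →
        ∑ i, n' i * (p' i : ℝ) > ∑ i, n' i * (q i : ℝ)) := by
  classical
  constructor
  · rintro ⟨p, hp, n, hn⟩
    exact ⟨p, hp, n, fun q hq hqp => hn q (Finset.mem_of_mem_filter q hq) hqp⟩
  · rintro ⟨p', hp', n', hn'⟩
    obtain ⟨hp'F, hp'pos⟩ := Finset.mem_filter.mp hp'
    have hF : F.Nonempty := ⟨p', hp'F⟩
    set g : (Fin d → ℕ) → ℝ := fun q => ∑ i, n' i * (q i : ℝ) with hg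
    obtain ⟨pm, hpmF, hpmmax⟩ := F.exists_max_image g hF
    set c : ℝ := g pm with hc
    set T : Finset (Fin d → ℕ) := F.filter (fun q => g q = c) with hT
    have hTF : T ⊆ F := Finset.filter_subset _ _
    have hTne : T.Nonempty := ⟨pm, Finset.mem_filter.mpr ⟨hpmF, rfl⟩⟩
    -- every point of T has positive coefficient
    have hTpos : ∀ q ∈ T, 0 < coef q := by
      intro q hq
      obtain ⟨hqF, hqc⟩ := Finset.mem_filter.mp hq
      by_contra hpos
      have hqneg : coef q < 0 := ((hcoef q hqF).lt_or_gt).resolve_right hpos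
      have hqne : q ≠ p' := fun h => by rw [h] at hqneg; linarith
      have := hn' q (Finset.mem_filter.mpr ⟨hqF, hqneg⟩) hqne
      have hle : g p' ≤ c := hpmmax p' hp'F
      have hlt : g q < g p' := this
      rw [hqc] at hlt
      linarith
    obtain ⟨p, hpT, n₀, hn₀⟩ := exists_exposed_point T hTne
    set h : (Fin d → ℕ) → ℝ := fun q => ∑ i, n₀ i * (q i : ℝ) with hh
    have hpF : p ∈ F := hTF hpT
    have hgp : g p = c := (Finset.mem_filter.mp hpT).2
    -- bound on |h|
    set R : ℝ := F.sup' hF (fun q => |h q|) with hR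
    have hRb : ∀ q ∈ F, |h q| ≤ R := fun q hq => Finset.le_sup' (fun q => |h q|) hq
    -- gap
    by_cases hU : (F.filter (fun q => g q ≠ c)).Nonempty
    · set δ : ℝ := (F.filter (fun q => g q ≠ c)).inf' hU (fun q => c - g q) with hδ
      have hδpos : 0 < δ := by
        rw [hδ]
        rw [Finset.lt_inf'_iff]
        intro q hq
        obtain ⟨hqF, hqc⟩ := Finset.mem_filter.mp hq
        have := hpmmax q hqF
        have : g q < c := lt_of_le_of_ne this hqc
        linarith
      set K : ℝ := (2 * R + 1) / δ with hK
      have hKδ : K * δ = 2 * R + 1 := div_mul_cancel₀ _ (ne_of_gt hδpos)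
      refine ⟨p, Finset.mem_filter.mpr ⟨hpF, hTpos p hpT⟩, fun i => K * n' i + n₀ i,
        fun q hqF hqp => ?_⟩
      have hexpand : ∀ r : Fin d → ℕ,
          ∑ i, (K * n' i + n₀ i) * (r i : ℝ) = K * g r + h r := by
        intro r
        show ∑ i, (K * n' i + n₀ i) * (r i : ℝ)
            = K * (∑ i, n' i * (r i : ℝ)) + ∑ i, n₀ i * (r i : ℝ)
        rw [Finset.mul_sum, ← Finset.sum_add_distrib]
        apply Finset.sum_congr rfl; intro i _; ring
      rw [gt_iff_lt, hexpand, hexpand]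
      by_cases hqT : q ∈ T
      · have hgq : g q = c := (Finset.mem_filter.mp hqT).2
        have hpq : h q < h p := hn₀ q hqT hqp
        rw [hgq, hgp]
        linarith
      · have hqc : g q ≠ c := fun hh' => hqT (Finset.mem_filter.mpr ⟨hqF, hh'⟩)
        have hgap : δ ≤ c - g q := Finset.inf'_le _ (Finset.mem_filter.mpr ⟨hqF, hqc⟩)
        have h1 : |h p| ≤ R := hRb p hpF
        have h2 : |h q| ≤ R := hRb q hqF
        have h1' := abs_le.mp h1
        have h2' := abs_le.mp h2
        have hKpos : 0 ≤ K := by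
          apply div_nonneg _ (le_of_lt hδpos)
          have : 0 ≤ R := le_trans (abs_nonneg _) h1
          linarith
        have : K * δ ≤ K * (c - g q) := by
          apply mul_le_mul_of_nonneg_left hgap hKpos
        rw [hgp]
        nlinarith
    · -- T = F
      refine ⟨p, Finset.mem_filter.mpr ⟨hpF, hTpos p hpT⟩, n₀, fun q hqF hqp => ?_⟩
      have hqT : q ∈ T := by
        rcases Finset.not_nonempty_iff_eq_empty.mp hU with he
        by_contra hqT
        have : q ∈ F.filter (fun q => g q ≠ c) :=
          Finset.mem_filter.mpr ⟨hqF, fun hh' => hqT (Finset.mem_filter.mpr ⟨hqF, hh'⟩)⟩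
        rw [he] at this
        exact absurd this (Finset.notMem_empty q)
      exact hn₀ q hqT hqp
end

section
/- Let f be a polynomial with frame F, positive frame F⁺ and negative frame F⁻. Some p ∈ F⁺ is a vertex of the Newton polytope conv(F) if and only if there exist n ∈ ℝ^d and c ∈ ℝ such that (∨_{p ∈ F⁺} nᵀp + c > 0) ∧ (∧_{q ∈ F⁻} nᵀq + c < 0). -/
lemma baseB_inj : ∀ (d B : ℕ) (p q : Fin d → ℕ), (∀ i, p i < B) → (∀ i, q i < B) →
    (∑ i : Fin d, B ^ (i : ℕ) * p i = ∑ i : Fin d, B ^ (i : ℕ) * q i) → p = q := by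
  intro d
  induction d with
  | zero => intro B p q _ _ _; funext i; exact i.elim0
  | succ d ih =>
    intro B p q hp hq h
    have hB : 0 < B := lt_of_le_of_lt (Nat.zero_le _) (hp 0)
    rw [Fin.sum_univ_succ, Fin.sum_univ_succ] at h
    simp only [Fin.val_zero, pow_zero, one_mul, Fin.val_succ] at h
    have hre : ∀ r : Fin (d+1) → ℕ,
        (∑ i : Fin d, B ^ ((i:ℕ)+1) * r i.succ) = B * ∑ i : Fin d, B ^ (i:ℕ) * r i.succ := by
      intro r
      rw [Finset.mul_sum]
      refine Finset.sum_congr rfl fun i _ => by ring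
    rw [hre p, hre q] at h
    have h0 : p 0 = q 0 := by
      have := congrArg (· % B) h
      simpa [Nat.add_mul_mod_self_left, Nat.mod_eq_of_lt (hp 0), Nat.mod_eq_of_lt (hq 0)] using this
    have htail : (fun i => p (Fin.succ i)) = (fun i => q (Fin.succ i)) := by
      apply ih B
      · intro i; exact hp _
      · intro i; exact hq _
      · have := h
        rw [h0] at this
        have h2 : B * ∑ i : Fin d, B ^ (i:ℕ) * p i.succ = B * ∑ i : Fin d, B ^ (i:ℕ) * q i.succ :=
          Nat.add_left_cancel this
        exact Nat.eq_of_mul_eq_mul_left hB h2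
    funext i
    refine Fin.cases h0 (fun j => ?_) i
    exact congrFun htail j

lemma exists_sep_weight {d : ℕ} (S : Finset (Fin d → ℕ)) :
    ∃ w : Fin d → ℝ, ∀ p ∈ S, ∀ q ∈ S, p ≠ q →
      (∑ i, w i * (p i : ℝ)) ≠ ∑ i, w i * (q i : ℝ) := by
  classical
  set B : ℕ := S.sup (fun p => Finset.univ.sup p) + 1 with hB
  have hbound : ∀ p ∈ S, ∀ i, p i < B := by
    intro p hp i
    have : p i ≤ S.sup (fun p => Finset.univ.sup p) :=
      le_trans (Finset.le_sup (Finset.mem_univ i)) (Finset.le_sup hp)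
    omega
  refine ⟨fun i => (B : ℝ) ^ (i : ℕ), ?_⟩
  intro p hp q hq hne heq
  apply hne
  apply baseB_inj d B p q (hbound p hp) (hbound q hq)
  have : ((∑ i : Fin d, B ^ (i:ℕ) * p i : ℕ) : ℝ) = ((∑ i : Fin d, B ^ (i:ℕ) * q i : ℕ) : ℝ) := by
    push_cast [hB]
    simpa [hB] using heq
  exact_mod_cast this
lemma exists_vertex {d : ℕ} (S : Finset (Fin d → ℕ)) (hS : S.Nonempty) (n : Fin d → ℝ) :
    ∃ p ∈ S, (∀ q ∈ S, (∑ i, n i * (q i : ℝ)) ≤ ∑ i, n i * (p i : ℝ)) ∧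
      ∃ n' : Fin d → ℝ, ∀ q ∈ S, q ≠ p →
        (∑ i, n' i * (q i : ℝ)) < ∑ i, n' i * (p i : ℝ) := by
  classical
  obtain ⟨w, hw⟩ := exists_sep_weight S
  set N : (Fin d → ℕ) → ℝ := fun q => ∑ i, n i * (q i : ℝ) with hN
  set W : (Fin d → ℕ) → ℝ := fun q => ∑ i, w i * (q i : ℝ) with hW
  set m : ℝ := S.sup' hS N with hm
  set T : Finset (Fin d → ℕ) := S.filter (fun q => N q = m) with hT
  have hTne : T.Nonempty := by
    obtain ⟨x, hx, hxe⟩ := Finset.exists_mem_eq_sup' hS N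
    exact ⟨x, Finset.mem_filter.mpr ⟨hx, hxe.symm⟩⟩
  obtain ⟨p, hpT, hpmax⟩ := Finset.exists_max_image T W hTne
  have hpS : p ∈ S := (Finset.mem_filter.mp hpT).1
  have hpN : N p = m := (Finset.mem_filter.mp hpT).2
  have hNle : ∀ q ∈ S, N q ≤ m := fun q hq => Finset.le_sup' N hq
  obtain ⟨K0, hK0⟩ := Finset.exists_le
    ((S.filter (fun q => N q < m)).image (fun q => (W q - W p) / (m - N q)))
  set K : ℝ := K0 + 1 with hK
  refine ⟨p, hpS, fun q hq => by rw [show (∑ i, n i * (p i:ℝ)) = m from hpN]; exact hNle q hq, fun i => K * n i + w i, ?_⟩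
  intro q hq hqp
  have hexp : ∀ r : Fin d → ℕ, (∑ i, (K * n i + w i) * (r i : ℝ)) = K * N r + W r := by
    intro r
    simp only [hN, hW, Finset.mul_sum, ← Finset.sum_add_distrib]
    refine Finset.sum_congr rfl fun i _ => by ring
  rw [hexp, hexp, hpN]
  rcases eq_or_lt_of_le (hNle q hq) with hqm | hqm
  · -- q ∈ T, use W
    have hqT : q ∈ T := Finset.mem_filter.mpr ⟨hq, hqm⟩
    have hWlt : W q < W p :=
      lt_of_le_of_ne (hpmax q hqT) (hw q hq p hpS hqp)
    rw [hqm]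
    linarith
  · -- N q < m
    have hratio : (W q - W p) / (m - N q) ≤ K0 :=
      hK0 _ (Finset.mem_image.mpr ⟨q, Finset.mem_filter.mpr ⟨hq, hqm⟩, rfl⟩)
    have hpos : 0 < m - N q := by linarith
    have := (div_le_iff₀ hpos).mp hratio
    nlinarith

/-- Some p ∈ F⁺ is a vertex of conv(F) iff there exist n and c with
(∨_{p ∈ F⁺} nᵀp + c > 0) ∧ (∧_{q ∈ F⁻} nᵀq + c < 0). -/
theorem positive_vertex_iff_linear_encoding {d : ℕ}
    (F : Finset (Fin d → ℕ)) (coef : (Fin d → ℕ) → ℝ)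
    (hcoef : ∀ q ∈ F, coef q ≠ 0) :
    (∃ p ∈ F.filter (fun q => 0 < coef q), ∃ n : Fin d → ℝ,
      ∀ q ∈ F, q ≠ p → ∑ i, n i * (p i : ℝ) > ∑ i, n i * (q i : ℝ)) ↔
    (∃ (n : Fin d → ℝ) (c : ℝ),
      (∃ p ∈ F.filter (fun q => 0 < coef q), (∑ i, n i * (p i : ℝ)) + c > 0) ∧
      (∀ q ∈ F.filter (fun q => coef q < 0), (∑ i, n i * (q i : ℝ)) + c < 0)) := by
  classical
  constructor
  · rintro ⟨p, hp, n, hsep⟩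
    obtain ⟨hpF, hppos⟩ := Finset.mem_filter.mp hp
    set Np : ℝ := ∑ i, n i * (p i : ℝ) with hNp
    set Tneg : Finset (Fin d → ℕ) := F.filter (fun q => coef q < 0) with hTneg
    have hlt : ∀ q ∈ Tneg, (∑ i, n i * (q i : ℝ)) < Np := by
      intro q hq
      obtain ⟨hqF, hqneg⟩ := Finset.mem_filter.mp hq
      have hqp : q ≠ p := fun h => absurd hppos (by rw [← h]; linarith)
      exact hsep q hqF hqp
    rcases Tneg.eq_empty_or_nonempty with he | hne
    · refine ⟨n, 1 - Np, ⟨p, hp, by linarith⟩, ?_⟩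
      intro q hq; rw [he] at hq; exact absurd hq (Finset.notMem_empty q)
    · set mneg : ℝ := Tneg.sup' hne (fun q => ∑ i, n i * (q i : ℝ)) with hmneg
      have hmlt : mneg < Np := by
        obtain ⟨x, hx, hxe⟩ := Finset.exists_mem_eq_sup' hne (fun q => ∑ i, n i * (q i : ℝ))
        rw [hmneg, hxe]; exact hlt x hx
      refine ⟨n, -(mneg + Np) / 2, ⟨p, hp, by linarith⟩, ?_⟩
      intro q hq
      have : (∑ i, n i * (q i : ℝ)) ≤ mneg := Finset.le_sup' (fun q => ∑ i, n i * (q i : ℝ)) hq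
      linarith
  · rintro ⟨n, c, ⟨p₀, hp₀, hp₀pos⟩, hneg⟩
    obtain ⟨hp₀F, hp₀c⟩ := Finset.mem_filter.mp hp₀
    obtain ⟨p, hpF, hpmax, n', hsep⟩ := exists_vertex F ⟨p₀, hp₀F⟩ n
    have hpgt : (∑ i, n i * (p i : ℝ)) + c > 0 :=
      lt_of_lt_of_le hp₀pos (by linarith [hpmax p₀ hp₀F])
    have hppos : 0 < coef p := by
      rcases lt_trichotomy (coef p) 0 with h | h | h
      · have := hneg p (Finset.mem_filter.mpr ⟨hpF, h⟩); linarith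
      · exact absurd h (hcoef p hpF)
      · exact h
    exact ⟨p, Finset.mem_filter.mpr ⟨hpF, hppos⟩, n', fun q hq hqp => hsep q hq hqp⟩
end

section
/- Let f₁,…,f_m be polynomials in d variables over ℝ. The family {f_i} has a positive vertex cluster with respect to some n ∈ ℝ^d if and only if there exist n ∈ ℝ^d and c₁,…,c_m ∈ ℝ such that for every i: (∨_{p ∈ frame⁺(f_i)} nᵀp + c_i > 0) ∧ (∧_{q ∈ frame⁻(f_i)} nᵀq + c_i < 0). -/
lemma base_repr_inj : ∀ {d : ℕ} (B : ℕ) (q q' : Fin d → ℕ), (∀ j, q j < B) → (∀ j, q' j < B) →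
    (∑ j, q j * B ^ (j : ℕ)) = ∑ j, q' j * B ^ (j : ℕ) → q = q' := by
  intro d
  induction d with
  | zero => intro B q q' _ _ _; funext j; exact j.elim0
  | succ d ih =>
    intro B q q' hq hq' hsum
    rw [Fin.sum_univ_succ, Fin.sum_univ_succ] at hsum
    simp only [Fin.val_zero, pow_zero, mul_one, Fin.val_succ] at hsum
    have hrw : ∀ r : Fin (d+1) → ℕ, (∑ j : Fin d, r j.succ * B ^ ((j:ℕ)+1))
        = (∑ j : Fin d, r j.succ * B ^ (j:ℕ)) * B := by
      intro r
      rw [Finset.sum_mul]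
      exact Finset.sum_congr rfl fun j _ => by ring
    rw [hrw q, hrw q'] at hsum
    have hB : 0 < B := Nat.pos_of_ne_zero (by rintro rfl; exact Nat.not_lt_zero _ (hq 0))
    have h0 : q 0 = q' 0 := by
      have := congrArg (· % B) hsum
      simpa [Nat.add_mul_mod_self_right, Nat.mod_eq_of_lt (hq 0), Nat.mod_eq_of_lt (hq' 0)]
        using this
    have htail : (fun j : Fin d => q j.succ) = fun j => q' j.succ := by
      apply ih B _ _ (fun j => hq j.succ) (fun j => hq' j.succ)
      have : (∑ j : Fin d, q j.succ * B ^ (j:ℕ)) * B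
          = (∑ j : Fin d, q' j.succ * B ^ (j:ℕ)) * B := by omega
      exact Nat.eq_of_mul_eq_mul_right hB this
    funext j
    refine Fin.cases h0 (fun k => ?_) j
    exact congrFun htail k

/-- linear functional on exponent vectors -/
def vsum {d : ℕ} (w : Fin d → ℝ) (q : Fin d → ℕ) : ℝ := ∑ j, w j * (q j : ℝ)

/-- {f_i} has a positive vertex cluster w.r.t. some n iff there exist n
and c₁,…,c_m such that for every i:
(∨_{p ∈ frame⁺(f_i)} nᵀp + c_i > 0) ∧ (∧_{q ∈ frame⁻(f_i)} nᵀq + c_i < 0). -/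
theorem positive_vertex_cluster_iff_linear_encoding {d m : ℕ}
    (F : Fin m → Finset (Fin d → ℕ)) (coef : Fin m → (Fin d → ℕ) → ℝ)
    (hcoef : ∀ i, ∀ q ∈ F i, coef i q ≠ 0) :
    (∃ (n : Fin d → ℝ) (p : Fin m → (Fin d → ℕ)),
      ∀ i : Fin m, p i ∈ (F i).filter (fun q => 0 < coef i q) ∧
        ∀ q ∈ F i, q ≠ p i → ∑ j, n j * (p i j : ℝ) > ∑ j, n j * (q j : ℝ)) ↔
    (∃ (n : Fin d → ℝ) (c : Fin m → ℝ), ∀ i : Fin m,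
      (∃ p ∈ (F i).filter (fun q => 0 < coef i q),
        (∑ j, n j * (p j : ℝ)) + c i > 0) ∧
      (∀ q ∈ (F i).filter (fun q => coef i q < 0),
        (∑ j, n j * (q j : ℝ)) + c i < 0)) := by
  constructor
  · rintro ⟨n, p, h⟩
    have hc : ∀ i : Fin m, ∃ ci : ℝ,
        (∃ p' ∈ (F i).filter (fun q => 0 < coef i q), vsum n p' + ci > 0) ∧
        (∀ q ∈ (F i).filter (fun q => coef i q < 0), vsum n q + ci < 0) := by
      intro i
      obtain ⟨hpfil, hmax⟩ := h i
      have hpmem := Finset.mem_filter.1 hpfil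
      have hlt : ∀ q ∈ (F i).filter (fun q => coef i q < 0), vsum n q < vsum n (p i) := by
        intro q hq
        rw [Finset.mem_filter] at hq
        refine hmax q hq.1 ?_
        rintro rfl
        exact absurd hpmem.2 (not_lt.2 hq.2.le)
      by_cases hne : ((F i).filter (fun q => coef i q < 0)).Nonempty
      · have hsup : ((F i).filter (fun q => coef i q < 0)).sup' hne (vsum n) < vsum n (p i) := by
          rw [Finset.sup'_lt_iff]; exact hlt
        refine ⟨-((vsum n (p i)) + ((F i).filter (fun q => coef i q < 0)).sup' hne (vsum n))/2,
          ⟨p i, hpfil, by linarith⟩, ?_⟩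
        intro q hq
        have := Finset.le_sup' (vsum n) hq
        linarith
      · exact ⟨1 - vsum n (p i), ⟨p i, hpfil, by linarith⟩,
          fun q hq => absurd ⟨q, hq⟩ hne⟩
    choose c hc1 hc2 using hc
    exact ⟨n, c, fun i => ⟨hc1 i, hc2 i⟩⟩
  · rintro ⟨n, c, h⟩
    set S : Finset (Fin d → ℕ) := Finset.univ.biUnion F with hS
    set B : ℕ := (S.sup fun q => Finset.univ.sup q) + 1 with hBdef
    have hbound : ∀ q ∈ S, ∀ j, q j < B := by
      intro q hq j
      have h1 : q j ≤ Finset.univ.sup q := Finset.le_sup (Finset.mem_univ j)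
      have h2 : Finset.univ.sup q ≤ S.sup fun q => Finset.univ.sup q := Finset.le_sup hq
      omega
    set w : Fin d → ℝ := fun j => (B:ℝ) ^ (j:ℕ) with hw
    have hcast : ∀ q : Fin d → ℕ, ((∑ j, q j * B ^ (j:ℕ) : ℕ) : ℝ) = vsum w q := by
      intro q
      unfold vsum
      rw [hw]
      push_cast
      exact Finset.sum_congr rfl fun j _ => mul_comm _ _
    have hinj : ∀ q ∈ S, ∀ q' ∈ S, vsum w q = vsum w q' → q = q' := by
      intro q hq q' hq' he
      refine base_repr_inj B q q' (hbound q hq) (hbound q' hq') ?_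
      have : ((∑ j, q j * B ^ (j:ℕ) : ℕ) : ℝ) = ((∑ j, q' j * B ^ (j:ℕ) : ℕ) : ℝ) := by
        rw [hcast, hcast, he]
      exact_mod_cast this
    -- choose epsilon
    set g : (Fin d → ℕ) × (Fin d → ℕ) → ℝ := fun pr =>
      if vsum n pr.1 < vsum n pr.2 ∧ vsum w pr.2 < vsum w pr.1 then
        (vsum n pr.2 - vsum n pr.1) / (vsum w pr.1 - vsum w pr.2)
      else 1 with hg
    set T : Finset ℝ := insert (1:ℝ) ((S ×ˢ S).image g) with hT
    have hTne : T.Nonempty := ⟨1, Finset.mem_insert_self _ _⟩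
    set ε : ℝ := T.inf' hTne id / 2 with hε
    have hgpos : ∀ x ∈ T, 0 < x := by
      intro x hx
      rw [hT, Finset.mem_insert] at hx
      rcases hx with rfl | hx
      · norm_num
      · obtain ⟨pr, _, rfl⟩ := Finset.mem_image.1 hx
        rw [hg]
        dsimp only
        split_ifs with hcond
        · exact div_pos (by linarith [hcond.1]) (by linarith [hcond.2])
        · norm_num
    have hεpos : 0 < ε := by
      rw [hε]
      have : 0 < T.inf' hTne id := by
        rw [Finset.lt_inf'_iff]
        exact hgpos
      linarith
    have hεlt : ∀ x ∈ T, ε < x := by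
      intro x hx
      have h1 : T.inf' hTne id ≤ x := Finset.inf'_le id hx
      have h2 : 0 < x := hgpos x hx
      have h3 : 0 < T.inf' hTne id := by rw [Finset.lt_inf'_iff]; exact hgpos
      rw [hε]
      linarith
    have hkey : ∀ q ∈ S, ∀ q' ∈ S, vsum n q < vsum n q' →
        vsum n q + ε * vsum w q < vsum n q' + ε * vsum w q' := by
      intro q hq q' hq' hlt
      by_cases hwle : vsum w q ≤ vsum w q'
      · have := mul_le_mul_of_nonneg_left hwle hεpos.le
        linarith
      · push_neg at hwle
        have hmem : g (q, q') ∈ T := by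
          rw [hT]
          exact Finset.mem_insert_of_mem (Finset.mem_image_of_mem g
            (Finset.mem_product.2 ⟨hq, hq'⟩))
        have hlt2 := hεlt _ hmem
        rw [hg] at hlt2
        simp only [if_pos (⟨hlt, hwle⟩ : vsum n q < vsum n q' ∧ vsum w q' < vsum w q)] at hlt2
        have hd : (0:ℝ) < vsum w q - vsum w q' := by linarith
        rw [lt_div_iff₀ hd] at hlt2
        nlinarith
    set n' : Fin d → ℝ := fun j => n j + ε * w j with hn'
    have hvn' : ∀ q : Fin d → ℕ, vsum n' q = vsum n q + ε * vsum w q := by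
      intro q
      unfold vsum
      rw [hn', Finset.mul_sum, ← Finset.sum_add_distrib]
      exact Finset.sum_congr rfl fun j _ => by ring
    have hex : ∀ i : Fin m, ∃ p, p ∈ F i ∧ ∀ q ∈ F i, vsum n' q ≤ vsum n' p := by
      intro i
      obtain ⟨p₀, hp₀, _⟩ := (h i).1
      have hne : (F i).Nonempty := ⟨p₀, (Finset.mem_filter.1 hp₀).1⟩
      obtain ⟨b, hb, hmax⟩ := Finset.exists_max_image (F i) (vsum n') hne
      exact ⟨b, hb, hmax⟩
    choose p hpmem hpmax using hex
    have hSin : ∀ i, ∀ q ∈ F i, q ∈ S := by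
      intro i q hq
      rw [hS]
      exact Finset.mem_biUnion.2 ⟨i, Finset.mem_univ i, hq⟩
    refine ⟨n', p, fun i => ?_⟩
    obtain ⟨p₀, hp₀fil, hp₀pos⟩ := (h i).1
    have hnegall := (h i).2
    have hp₀mem := (Finset.mem_filter.1 hp₀fil).1
    have hstrict : ∀ q ∈ F i, q ≠ p i → vsum n' (p i) > vsum n' q := by
      intro q hq hne
      have hle := hpmax i q hq
      rcases lt_or_eq_of_le hle with hlt | heq
      · exact hlt
      · exfalso
        have hqS := hSin i q hq
        have hpS := hSin i (p i) (hpmem i)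
        rw [hvn' q, hvn' (p i)] at heq
        have hvneq : vsum n q = vsum n (p i) := by
          rcases lt_trichotomy (vsum n q) (vsum n (p i)) with h1 | h1 | h1
          · have := hkey q hqS (p i) hpS h1; linarith
          · exact h1
          · have := hkey (p i) hpS q hqS h1; linarith
        have hvweq : vsum w q = vsum w (p i) := by
          have : ε * vsum w q = ε * vsum w (p i) := by linarith
          exact mul_left_cancel₀ (ne_of_gt hεpos) this
        exact hne (hinj q hqS (p i) hpS hvweq)
    have hppos : 0 < coef i (p i) := by
      rcases (hcoef i (p i) (hpmem i)).lt_or_gt with hneg | hpos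
      · exfalso
        have hpin : p i ∈ (F i).filter (fun q => coef i q < 0) :=
          Finset.mem_filter.2 ⟨hpmem i, hneg⟩
        have h1 : vsum n (p i) + c i < 0 := hnegall (p i) hpin
        have h1' : vsum n p₀ + c i > 0 := hp₀pos
        have h2 : vsum n (p i) < vsum n p₀ := by linarith
        have h3 := hkey (p i) (hSin i (p i) (hpmem i)) p₀ (hSin i p₀ hp₀mem) h2
        have h4 : vsum n' p₀ ≤ vsum n' (p i) := hpmax i p₀ hp₀mem
        rw [hvn' p₀, hvn' (p i)] at h4
        linarith
      · exact hpos
    exact ⟨Finset.mem_filter.2 ⟨hpmem i, hppos⟩, hstrict⟩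
end

section
/- Let f ∈ ℝ[x₁,…,x_d] and define Π(f) = {r ∈ (0,∞)^d : f(r) > 0}. If p ∈ frame⁺(f) is a vertex of the Newton polytope of f with respect to n ∈ ℝ^d, then either Π(f) is unbounded, or the closure of Π(f) contains the origin 0 ∈ ℝ^d. -/
open Filter Real Topology

/-- Along the curve `a ↦ (a ^ m i)`, the value of the polynomial is eventually positive,
because the term corresponding to the vertex `p` dominates. -/
lemma key_eventually_pos {d : ℕ}
    (F : Finset (Fin d → ℕ)) (coef : (Fin d → ℕ) → ℝ)
    (p : Fin d → ℕ) (hp : p ∈ F) (hppos : 0 < coef p) (m : Fin d → ℝ)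
    (hvert : ∀ q ∈ F, q ≠ p →
      ∑ i, m i * (p i : ℝ) > ∑ i, m i * (q i : ℝ)) :
    ∀ᶠ a : ℝ in atTop,
      0 < ∑ q ∈ F, coef q * ∏ i, (a ^ m i) ^ q i := by
  set c : (Fin d → ℕ) → ℝ := fun q => ∑ i, m i * (q i : ℝ) with hc
  -- the renormalized sum tends to coef p
  have hlim : Tendsto (fun a : ℝ => ∑ q ∈ F, coef q * a ^ (c q - c p)) atTop
      (𝓝 (∑ q ∈ F, if q = p then coef p else 0)) := by
    apply tendsto_finset_sum
    intro q hq
    by_cases hqp : q = p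
    · subst hqp
      simp only [if_pos rfl, sub_self]
      have : (fun a : ℝ => coef q * a ^ (0 : ℝ)) = fun _ => coef q := by
        funext a; rw [Real.rpow_zero, mul_one]
      rw [this]; exact tendsto_const_nhds
    · simp only [if_neg hqp]
      have hneg : 0 < c p - c q := sub_pos.mpr (hvert q hq hqp)
      have h0 : Tendsto (fun a : ℝ => a ^ (-(c p - c q))) atTop (𝓝 0) :=
        tendsto_rpow_neg_atTop hneg
      have := h0.const_mul (coef q)
      simp only [mul_zero] at this
      convert this using 2 with a
      ring_nf
  have hsum : (∑ q ∈ F, if q = p then coef p else 0) = coef p := by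
    rw [Finset.sum_ite_eq' F p (fun _ => coef p)]; simp [hp]
  rw [hsum] at hlim
  have hev : ∀ᶠ a : ℝ in atTop, 0 < ∑ q ∈ F, coef q * a ^ (c q - c p) :=
    hlim.eventually (eventually_gt_nhds hppos)
  filter_upwards [hev, eventually_gt_atTop (0 : ℝ)] with a hS ha
  have hprod : ∀ q : Fin d → ℕ, (∏ i, (a ^ m i) ^ q i) = a ^ c q := by
    intro q
    have : ∀ i, (a ^ m i) ^ q i = a ^ (m i * (q i : ℝ)) := by
      intro i
      rw [← Real.rpow_natCast (a ^ m i) (q i), ← Real.rpow_mul ha.le]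
    simp_rw [this]
    rw [← Real.rpow_sum_of_pos ha]
  have hsplit : ∀ q : Fin d → ℕ, a ^ c q = a ^ (c q - c p) * a ^ c p := by
    intro q
    rw [← Real.rpow_add ha, sub_add_cancel]
  calc (0:ℝ) < (∑ q ∈ F, coef q * a ^ (c q - c p)) * a ^ c p :=
        mul_pos hS (Real.rpow_pos_of_pos ha _)
    _ = ∑ q ∈ F, coef q * ∏ i, (a ^ m i) ^ q i := by
        rw [Finset.sum_mul]
        refine Finset.sum_congr rfl fun q _ => ?_
        rw [hprod, hsplit q]; ring

/-- If some p in the positive frame of f is a vertex of the Newton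
polytope w.r.t. n, then Π(f) = {r ∈ (0,∞)^d : f(r) > 0} is unbounded or its closure
contains the origin. -/
theorem subtropical_necessary_condition {d : ℕ}
    (F : Finset (Fin d → ℕ)) (coef : (Fin d → ℕ) → ℝ)
    (hcoef : ∀ q ∈ F, coef q ≠ 0)
    (p : Fin d → ℕ) (hp : p ∈ F) (hppos : 0 < coef p) (n : Fin d → ℝ)
    (hvert : ∀ q ∈ F, q ≠ p →
      ∑ i, n i * (p i : ℝ) > ∑ i, n i * (q i : ℝ)) :
    ¬ Bornology.IsBounded
        {x : Fin d → ℝ | (∀ i, 0 < x i) ∧ 0 < ∑ q ∈ F, coef q * ∏ i, x i ^ q i} ∨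
    (0 : Fin d → ℝ) ∈ closure
        {x : Fin d → ℝ | (∀ i, 0 < x i) ∧ 0 < ∑ q ∈ F, coef q * ∏ i, x i ^ q i} := by
  set s := {x : Fin d → ℝ | (∀ i, 0 < x i) ∧ 0 < ∑ q ∈ F, coef q * ∏ i, x i ^ q i}
  by_cases hn : ∃ i, 0 < n i
  · -- unbounded case
    obtain ⟨i, hi⟩ := hn
    left
    intro hb
    obtain ⟨C, hC⟩ := isBounded_iff_forall_norm_le.mp hb
    have hmem : ∀ᶠ a : ℝ in atTop, (fun j => a ^ n j) ∈ s := by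
      filter_upwards [key_eventually_pos F coef p hp hppos n hvert,
        eventually_gt_atTop (0 : ℝ)] with a hpos ha
      exact ⟨fun j => Real.rpow_pos_of_pos ha _, hpos⟩
    have hbig : ∀ᶠ a : ℝ in atTop, C < a ^ n i :=
      (tendsto_rpow_atTop hi).eventually_gt_atTop C
    obtain ⟨a, hmem, hbig⟩ := (hmem.and hbig).exists
    have h1 : ‖(fun j => a ^ n j : Fin d → ℝ)‖ ≤ C := hC _ hmem
    have h2 : a ^ n i ≤ ‖(fun j => a ^ n j : Fin d → ℝ)‖ :=
      le_trans (le_abs_self _) (norm_le_pi_norm (fun j => a ^ n j) i)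
    linarith
  · -- all n i ≤ 0 : perturb to strictly negative exponents
    push_neg at hn
    right
    -- find ε > 0 keeping the strict inequalities for m = n - ε
    have hev : ∀ᶠ ε : ℝ in 𝓝 0, ∀ q ∈ F, q ≠ p →
        ∑ i, (n i - ε) * (p i : ℝ) > ∑ i, (n i - ε) * (q i : ℝ) := by
      rw [eventually_all_finset]
      intro q hq
      by_cases hqp : q = p
      · exact Eventually.of_forall fun ε h => absurd hqp h
      · have hcont : Continuous fun ε : ℝ =>
            (∑ i, (n i - ε) * (p i : ℝ)) - ∑ i, (n i - ε) * (q i : ℝ) := by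
          continuity
        have h0 : (0:ℝ) < (∑ i, (n i - 0) * (p i : ℝ)) - ∑ i, (n i - 0) * (q i : ℝ) := by
          simp only [sub_zero]
          exact sub_pos.mpr (hvert q hq hqp)
        have := (hcont.continuousAt (x := 0)).eventually (eventually_gt_nhds h0)
        filter_upwards [this] with ε hε _
        linarith
    have hev' : ∀ᶠ ε : ℝ in 𝓝[>] (0:ℝ), ∀ q ∈ F, q ≠ p →
        ∑ i, (n i - ε) * (p i : ℝ) > ∑ i, (n i - ε) * (q i : ℝ) :=
      hev.filter_mono nhdsWithin_le_nhds
    obtain ⟨ε, hP, hεpos⟩ := (hev'.and self_mem_nhdsWithin).exists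
    set m : Fin d → ℝ := fun i => n i - ε with hm
    have hmneg : ∀ i, m i < 0 := fun i => by
      have := hn i; simp only [hm]; linarith [hεpos]
    have htend : Tendsto (fun a : ℝ => (fun j => a ^ m j : Fin d → ℝ)) atTop (𝓝 0) := by
      rw [tendsto_pi_nhds]
      intro j
      have : Tendsto (fun a : ℝ => a ^ (-(-(m j)))) atTop (𝓝 0) :=
        tendsto_rpow_neg_atTop (by linarith [hmneg j])
      simpa using this
    refine mem_closure_of_tendsto htend ?_
    filter_upwards [key_eventually_pos F coef p hp hppos m hP,
      eventually_gt_atTop (0 : ℝ)] with a hpos ha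
    exact ⟨fun j => Real.rpow_pos_of_pos ha _, hpos⟩
end

section
/- Let f₁,…,f_m be polynomials in d variables over ℝ, τ a sign variant, and suppose (p₁,…,p_m) is a positive vertex cluster of the polynomials τ(f₁),…,τ(f_m) with respect to n ∈ ℝ^d. Then there exists a₀ > 0 such that for all a ≥ a₀: f_i(τ(a)^n) > 0 for all i ∈ {1,…,m}, where τ(a) ∈ ℝ^d has i-th coordinate a if τ(x_i) = x_i and -a if τ(x_i) = -x_i. In particular the system ∧ f_i > 0 has a real solution (not necessarily with positive coordinates). -/
open Filter Real

private lemma prod_sign_eq {d : ℕ} (τ : Fin d → Bool) (q : Fin d → ℕ) :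
    (∏ j : Fin d, (if τ j then (-1 : ℝ) else 1) ^ q j) =
      (-1 : ℝ) ^ (Finset.univ.filter (fun j => τ j = true ∧ Odd (q j))).card := by
  rw [← Finset.prod_const, ← Finset.prod_filter_mul_prod_filter_not
    (Finset.univ) (fun j => τ j = true ∧ Odd (q j))]
  have h1 : ∀ j ∈ Finset.univ.filter (fun j => τ j = true ∧ Odd (q j)),
      (if τ j then (-1 : ℝ) else 1) ^ q j = -1 := by
    intro j hj
    simp only [Finset.mem_filter] at hj
    rw [if_pos hj.2.1, Odd.neg_one_pow hj.2.2]
  have h2 : ∀ j ∈ Finset.univ.filter (fun j => ¬(τ j = true ∧ Odd (q j))),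
      (if τ j then (-1 : ℝ) else 1) ^ q j = 1 := by
    intro j hj
    simp only [Finset.mem_filter, not_and_or] at hj
    rcases hj.2 with h | h
    · rw [if_neg h, one_pow]
    · by_cases ht : τ j = true
      · rw [if_pos ht, (Nat.not_odd_iff_even.mp h).neg_one_pow]
      · rw [if_neg ht, one_pow]
  rw [Finset.prod_congr rfl h1, Finset.prod_congr rfl h2, Finset.prod_const_one, mul_one]

/-- If (p₁,…,p_m) is a positive vertex cluster of τ(f₁),…,τ(f_m) w.r.t.
n (each p_i is a vertex of the frame of f_i w.r.t. n and the coefficient of p_i in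
τ(f_i), namely (-1)^k (f_i)_{p_i}, is positive), then there is a₀ > 0 with
f_i(τ(a)^n) > 0 for all a ≥ a₀ and all i; in particular ∧ f_i > 0 has a real
solution. -/
theorem sign_variant_positive_vertex_cluster_sat {d m : ℕ}
    (F : Fin m → Finset (Fin d → ℕ)) (coef : Fin m → (Fin d → ℕ) → ℝ)
    (hcoef : ∀ i, ∀ q ∈ F i, coef i q ≠ 0)
    (τ : Fin d → Bool)
    (p : Fin m → (Fin d → ℕ)) (hp : ∀ i, p i ∈ F i)
    (hppos : ∀ i, 0 <
      (-1 : ℝ) ^ (Finset.univ.filter (fun j => τ j = true ∧ Odd (p i j))).card *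
        coef i (p i))
    (n : Fin d → ℝ)
    (hvert : ∀ i, ∀ q ∈ F i, q ≠ p i →
      ∑ j, n j * (p i j : ℝ) > ∑ j, n j * (q j : ℝ)) :
    (∃ a₀ : ℝ, 0 < a₀ ∧ ∀ a : ℝ, a₀ ≤ a → ∀ i : Fin m,
      0 < ∑ q ∈ F i, coef i q *
        ∏ j, ((if τ j then (-1 : ℝ) else 1) * a ^ n j) ^ q j) ∧
    (∃ x : Fin d → ℝ,
      ∀ i : Fin m, 0 < ∑ q ∈ F i, coef i q * ∏ j, x j ^ q j) := by
  set ε : (Fin d → ℕ) → ℝ := fun q =>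
    (-1 : ℝ) ^ (Finset.univ.filter (fun j => τ j = true ∧ Odd (q j))).card with hε
  set N : (Fin d → ℕ) → ℝ := fun q => ∑ j, n j * (q j : ℝ) with hN
  -- product rewrite
  have key : ∀ a : ℝ, 0 < a → ∀ q : Fin d → ℕ,
      (∏ j, ((if τ j then (-1 : ℝ) else 1) * a ^ n j) ^ q j) = ε q * a ^ N q := by
    intro a ha q
    have : ∀ j : Fin d, ((if τ j then (-1 : ℝ) else 1) * a ^ n j) ^ q j
        = (if τ j then (-1 : ℝ) else 1) ^ q j * a ^ (n j * (q j : ℝ)) := by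
      intro j
      rw [mul_pow, ← Real.rpow_natCast (a ^ n j) (q j), ← Real.rpow_mul ha.le]
    rw [Finset.prod_congr rfl (fun j _ => this j), Finset.prod_mul_distrib,
      prod_sign_eq, ← Real.rpow_sum_of_pos ha]
  -- eventual positivity for each i
  have main : ∀ i : Fin m, ∀ᶠ a : ℝ in atTop,
      0 < ∑ q ∈ F i, coef i q *
        ∏ j, ((if τ j then (-1 : ℝ) else 1) * a ^ n j) ^ q j := by
    intro i
    have hlim : Tendsto (fun a : ℝ => ∑ q ∈ F i, coef i q * ε q * a ^ (N q - N (p i)))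
        atTop (nhds (∑ q ∈ F i, if q = p i then coef i (p i) * ε (p i) else 0)) := by
      refine tendsto_finset_sum _ (fun q hq => ?_)
      by_cases hqp : q = p i
      · subst hqp
        simp only [if_pos rfl, sub_self]
        have : (fun a : ℝ => coef i (p i) * ε (p i) * a ^ (0 : ℝ)) =ᶠ[atTop]
            (fun _ => coef i (p i) * ε (p i)) := by
          filter_upwards [eventually_gt_atTop 0] with a _
          rw [Real.rpow_zero, mul_one]
        exact (tendsto_const_nhds).congr' this.symm
      · simp only [if_neg hqp]
        have hneg : N q - N (p i) < 0 := sub_neg.mpr (hvert i q hq hqp)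
        have : Tendsto (fun a : ℝ => a ^ (N q - N (p i))) atTop (nhds 0) := by
          have := tendsto_rpow_neg_atTop (y := -(N q - N (p i))) (by linarith)
          simpa using this
        simpa using this.const_mul (coef i q * ε q)
    have hsum : (∑ q ∈ F i, if q = p i then coef i (p i) * ε (p i) else 0)
        = coef i (p i) * ε (p i) := by
      rw [Finset.sum_ite_eq' (F i) (p i)]
      simp [hp i]
    rw [hsum] at hlim
    have hpos : 0 < coef i (p i) * ε (p i) := by
      have := hppos i
      rw [mul_comm] at this
      exact this
    have hev : ∀ᶠ a : ℝ in atTop,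
        0 < ∑ q ∈ F i, coef i q * ε q * a ^ (N q - N (p i)) :=
      hlim.eventually (eventually_gt_nhds hpos)
    filter_upwards [hev, eventually_gt_atTop (0 : ℝ)] with a hA ha
    have hrw : (∑ q ∈ F i, coef i q *
          ∏ j, ((if τ j then (-1 : ℝ) else 1) * a ^ n j) ^ q j)
        = a ^ N (p i) * ∑ q ∈ F i, coef i q * ε q * a ^ (N q - N (p i)) := by
      rw [Finset.mul_sum]
      refine Finset.sum_congr rfl (fun q hq => ?_)
      rw [key a ha q, sub_eq_add_neg, Real.rpow_add ha, Real.rpow_neg ha.le]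
      have h0 : a ^ N (p i) ≠ 0 := (Real.rpow_pos_of_pos ha _).ne'
      field_simp
    rw [hrw]
    exact mul_pos (Real.rpow_pos_of_pos ha _) hA
  have hall : ∀ᶠ a : ℝ in atTop, ∀ i : Fin m,
      0 < ∑ q ∈ F i, coef i q *
        ∏ j, ((if τ j then (-1 : ℝ) else 1) * a ^ n j) ^ q j :=
    eventually_all.mpr main
  obtain ⟨a₀, ha₀⟩ := (eventually_atTop).mp hall
  have hfirst : ∃ a₀ : ℝ, 0 < a₀ ∧ ∀ a : ℝ, a₀ ≤ a → ∀ i : Fin m,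
      0 < ∑ q ∈ F i, coef i q *
        ∏ j, ((if τ j then (-1 : ℝ) else 1) * a ^ n j) ^ q j := by
    refine ⟨max a₀ 1, lt_of_lt_of_le one_pos (le_max_right _ _), fun a ha => ?_⟩
    exact ha₀ a (le_trans (le_max_left _ _) ha)
  refine ⟨hfirst, ?_⟩
  obtain ⟨b, hb, hball⟩ := hfirst
  exact ⟨fun j => (if τ j then (-1 : ℝ) else 1) * b ^ n j, hball b le_rfl⟩
end
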